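/- The edge set of the confusion graph Γ_{a·t}(G) (the confusion graph for the tuple with each t_i repeated a times, i.e., scaled tuple a·t) is contained in the edge set of the a-fold disjunctive power Γ_t(G)^{*a}; consequently χ_f(Γ_{a·t}(G)) ≤ χ_f(Γ_t(G))^a. -/

import Mathlib

/-- A `b`-fold coloring of `Γ` with `k` colors: each vertex gets a `b`-element set of
colors, adjacent vertices get disjoint sets. -/
def IsNFoldColoring {V : Type*} (Γ : SimpleGraph V) (b k : ℕ)
    (c : V → Finset (Fin k)) : Prop :=
  (∀ v, (c v).card = b) ∧ ∀ u v, Γ.Adj u v → Disjoint (c u) (c v)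

/-- The `b`-fold chromatic number `χ^(b)(Γ)`. -/
noncomputable def nfoldChromaticNumber {V : Type*} (Γ : SimpleGraph V) (b : ℕ) : ℕ :=
  sInf {k | ∃ c : V → Finset (Fin k), IsNFoldColoring Γ b k c}

/-- The fractional chromatic number `χ_f(Γ) = inf_b χ^(b)(Γ)/b`. -/
noncomputable def fracChromaticNumber {V : Type*} (Γ : SimpleGraph V) : ℝ :=
  ⨅ b : ℕ+, (nfoldChromaticNumber Γ b : ℝ) / (b : ℝ)

/-- `s` is an independent set of `Γ`. -/
def IsIndepFinset {V : Type*} (Γ : SimpleGraph V) (s : Finset V) : Prop :=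
  ∀ u ∈ s, ∀ v ∈ s, ¬ Γ.Adj u v

/-- The independence number `α(Γ)`. -/
noncomputable def indepNum {V : Type*} [Fintype V] (Γ : SimpleGraph V) : ℕ :=
  sSup {k | ∃ s : Finset V, s.card = k ∧ IsIndepFinset Γ s}

/-- `Γ` is vertex transitive. -/
def IsVertexTransitive {V : Type*} (Γ : SimpleGraph V) : Prop :=
  ∀ u v : V, ∃ σ : Γ ≃g Γ, σ u = v

/-- The confusion graph `Γ_t(G)` of the directed graph `G` on `[n]` with edge
relation `E` (an edge `i → j` means `E i j`), for the integer tuple `t`.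
Vertices are tuples `x` with `x i ∈ {0,1}^{t i}`; two tuples are adjacent iff
they are confusable at some node `j`. -/
def confusionGraph (n : ℕ) (E : Fin n → Fin n → Prop) (t : Fin n → ℕ) :
    SimpleGraph ((i : Fin n) → Fin (t i) → Bool) where
  Adj x z := ∃ j, x j ≠ z j ∧ ∀ i, E i j → x i = z i
  symm := by
    constructor; rintro x z ⟨j, hj, h⟩
    exact ⟨j, fun h' => hj h'.symm, fun i hi => (h i hi).symm⟩
  loopless := by
    constructor; rintro x ⟨j, hj, -⟩
    exact hj rfl

/-- The disjunctive product of two simple graphs. -/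
def disjProd {V₁ V₂ : Type*} (Γ₁ : SimpleGraph V₁) (Γ₂ : SimpleGraph V₂) :
    SimpleGraph (V₁ × V₂) where
  Adj u v := Γ₁.Adj u.1 v.1 ∨ Γ₂.Adj u.2 v.2
  symm := by constructor; rintro u v (h | h); exacts [Or.inl h.symm, Or.inr h.symm]
  loopless := by constructor; rintro u (h | h) <;> exact h.ne rfl

/-- The `a`-fold disjunctive power of `Γ`: vertices are `Fin a → V`, adjacent iff
adjacent in some coordinate. -/
def disjPow {V : Type*} (Γ : SimpleGraph V) (a : ℕ) : SimpleGraph (Fin a → V) where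
  Adj u v := ∃ m, Γ.Adj (u m) (v m)
  symm := by constructor; rintro u v ⟨m, h⟩; exact ⟨m, h.symm⟩
  loopless := by constructor; rintro u ⟨m, h⟩; exact h.ne rfl

/-- The identification of the vertices of `Γ_{a·t}(G)` with those of the `a`-fold
disjunctive power of `Γ_t(G)`: the length-`a·t i` string at coordinate `i` is split
into `a` blocks of length `t i`. -/
def blockSplit (n a : ℕ) (t : Fin n → ℕ)
    (x : (i : Fin n) → Fin (a * t i) → Bool) :
    Fin a → ((i : Fin n) → Fin (t i) → Bool) :=
  fun m i b => x i (finProdFinEquiv (m, b))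

-- existence of some coloring for finite V
lemma exists_nfold {V : Type*} [Fintype V] (Γ : SimpleGraph V) (b : ℕ) :
    ∃ (k : ℕ) (c : V → Finset (Fin k)), IsNFoldColoring Γ b k c := by
  classical
  let e := (Fintype.equivFin V)
  refine ⟨Fintype.card V * b, fun v =>
    Finset.univ.map ⟨fun j : Fin b => finProdFinEquiv (e v, j), fun j₁ j₂ h => by
      simpa using (Prod.ext_iff.mp (finProdFinEquiv.injective h)).2⟩, fun v => by simp, ?_⟩
  intro u v huv
  rw [Finset.disjoint_left]
  rintro x hx hx'
  simp only [Finset.mem_map, Finset.mem_univ, Function.Embedding.coeFn_mk, true_and] at hx hx'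
  obtain ⟨j₁, rfl⟩ := hx
  obtain ⟨j₂, h2⟩ := hx'
  have := (Prod.ext_iff.mp (finProdFinEquiv.injective h2)).1
  exact huv.ne (e.injective this.symm)

lemma nfold_spec {V : Type*} [Fintype V] (Γ : SimpleGraph V) (b : ℕ) :
    ∃ c : V → Finset (Fin (nfoldChromaticNumber Γ b)), IsNFoldColoring Γ b _ c := by
  have h : {k | ∃ c : V → Finset (Fin k), IsNFoldColoring Γ b k c}.Nonempty := by
    obtain ⟨k, c, hc⟩ := exists_nfold Γ b; exact ⟨k, c, hc⟩
  exact Nat.sInf_mem h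

lemma frac_nonneg {V : Type*} (Γ : SimpleGraph V) : 0 ≤ fracChromaticNumber Γ :=
  le_ciInf fun b => by positivity

lemma frac_le {V : Type*} (Γ : SimpleGraph V) (b : ℕ+) :
    fracChromaticNumber Γ ≤ (nfoldChromaticNumber Γ b : ℝ) / (b : ℝ) :=
  ciInf_le ⟨0, by rintro x ⟨b, rfl⟩; positivity⟩ b

theorem confusionGraph_scaled_le_disjPow (n : ℕ) (E : Fin n → Fin n → Prop)
    (t : Fin n → ℕ) (a : ℕ) :
    (∀ x z, (confusionGraph n E (fun i => a * t i)).Adj x z →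
      (disjPow (confusionGraph n E t) a).Adj (blockSplit n a t x) (blockSplit n a t z)) ∧
    fracChromaticNumber (confusionGraph n E (fun i => a * t i))
      ≤ fracChromaticNumber (confusionGraph n E t) ^ a := by
  classical
  have part1 : ∀ x z, (confusionGraph n E (fun i => a * t i)).Adj x z →
      (disjPow (confusionGraph n E t) a).Adj (blockSplit n a t x) (blockSplit n a t z) := by
    rintro x z ⟨j, hj, h⟩
    obtain ⟨c, hc⟩ := Function.ne_iff.mp hj
    obtain ⟨⟨m, b⟩, rfl⟩ := finProdFinEquiv.surjective c
    refine ⟨m, j, ?_, ?_⟩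
    · intro heq; exact hc (congrFun heq b)
    · intro i hi; funext b'
      show x i (finProdFinEquiv (m, b')) = z i (finProdFinEquiv (m, b'))
      rw [h i hi]
  refine ⟨part1, ?_⟩
  set Γ := confusionGraph n E t with hΓ
  set Γ' := confusionGraph n E (fun i => a * t i) with hΓ'
  have key : ∀ b : ℕ+, fracChromaticNumber Γ' ≤
      ((nfoldChromaticNumber Γ b : ℝ) / (b : ℝ)) ^ a := by
    intro b
    set k := nfoldChromaticNumber Γ (b : ℕ) with hk
    obtain ⟨c, hcard, hdisj⟩ := nfold_spec Γ b
    have hcol : IsNFoldColoring Γ' ((b : ℕ) ^ a) (k ^ a)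
        (fun x => (Fintype.piFinset (fun m => c (blockSplit n a t x m))).map
          (finFunctionFinEquiv : (Fin a → Fin k) ≃ Fin (k ^ a)).toEmbedding) := by
      constructor
      · intro x
        rw [Finset.card_map, Fintype.card_piFinset]
        simp [hcard]
      · intro x z hadj
        obtain ⟨m, hm⟩ := part1 x z hadj
        rw [Finset.disjoint_map, Finset.disjoint_left]
        intro g hg hg'
        rw [Fintype.mem_piFinset] at hg hg'
        exact Finset.disjoint_left.mp (hdisj _ _ hm) (hg m) (hg' m)
    have hle : nfoldChromaticNumber Γ' ((b : ℕ) ^ a) ≤ k ^ a := Nat.sInf_le ⟨_, hcol⟩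
    calc fracChromaticNumber Γ'
        ≤ (nfoldChromaticNumber Γ' ((b ^ a : ℕ+) : ℕ) : ℝ) / ((b ^ a : ℕ+) : ℝ) :=
          frac_le Γ' (b ^ a)
      _ ≤ ((k : ℝ) ^ a) / ((b : ℝ) ^ a) := by
          have hb : (0 : ℝ) < (b : ℝ) ^ a := by positivity
          push_cast
          gcongr
          exact_mod_cast hle
      _ = ((k : ℝ) / (b : ℝ)) ^ a := (div_pow _ _ _).symm
  set F : ℝ → ℝ := fun x => (max x 0) ^ a with hF
  have hmono : Monotone F := fun x y hxy =>
    pow_le_pow_left₀ (le_max_right x 0) (max_le_max hxy le_rfl) a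
  have hcont : Continuous F := by continuity
  have hbdd : BddBelow (Set.range fun b : ℕ+ =>
      (nfoldChromaticNumber Γ b : ℝ) / (b : ℝ)) := ⟨0, by rintro x ⟨b, rfl⟩; positivity⟩
  have heq : F (⨅ b : ℕ+, (nfoldChromaticNumber Γ b : ℝ) / (b : ℝ)) =
      ⨅ b : ℕ+, F ((nfoldChromaticNumber Γ b : ℝ) / (b : ℝ)) :=
    hmono.map_ciInf_of_continuousAt hcont.continuousAt hbdd
  have h1 : fracChromaticNumber Γ' ≤ F (fracChromaticNumber Γ) := by
    show fracChromaticNumber Γ' ≤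
      F (⨅ b : ℕ+, (nfoldChromaticNumber Γ b : ℝ) / (b : ℝ))
    rw [heq]
    refine le_ciInf fun b => ?_
    have hnn : (0 : ℝ) ≤ (nfoldChromaticNumber Γ b : ℝ) / (b : ℝ) := by positivity
    simpa [hF, max_eq_left hnn] using key b
  calc fracChromaticNumber Γ' ≤ F (fracChromaticNumber Γ) := h1
    _ = fracChromaticNumber Γ ^ a := by
        simp [hF, max_eq_left (frac_nonneg Γ)]
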